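/- Let R : {1,…,n} → {1,…,n} be a bijection in each coordinate; define the empirical beta copula C_n^β(u) = (1/n) Σ_{i=1}^n Π_{j=1}^d F_{n,R_{ij}}(u_j), where F_{n,r} is the c.d.f. of the Beta(r, n+1−r) distribution. Then each univariate margin of C_n^β is the identity on [0,1]: for every j and every t ∈ [0,1], C_n^β(1,…,1,t,1,…,1) (t in position j) equals t. -/

import Mathlib

/-- The c.d.f. of the Beta(r, n+1−r) distribution (the distribution of the r-th
order statistic of n i.i.d. standard uniforms):
`F_{n,r}(t) = Σ_{s=r}^n C(n,s) t^s (1−t)^{n−s}`. -/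
noncomputable def betaOrderCdf (n r : ℕ) (t : ℝ) : ℝ :=
  ∑ s ∈ Finset.Icc r n, (n.choose s : ℝ) * t ^ s * (1 - t) ^ (n - s)

lemma betaOrderCdf_one (n r : ℕ) (hr : r ≤ n) : betaOrderCdf n r 1 = 1 := by
  unfold betaOrderCdf
  rw [Finset.sum_eq_single n]
  · simp
  · intro s hs hsn
    have : n - s ≠ 0 := by
      simp at hs; omega
    simp [this]
  · intro h
    simp at h; omega

lemma sum_betaOrderCdf (n : ℕ) (t : ℝ) :
    ∑ r ∈ Finset.Icc 1 n, betaOrderCdf n r t = n * t := by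
  unfold betaOrderCdf
  rw [Finset.sum_comm' (s' := fun s => Finset.Icc 1 s) (t' := Finset.Icc 1 n)
    (by intro r s; simp only [Finset.mem_Icc]; omega)]
  have key : ∀ s ∈ Finset.Icc 1 n,
      (∑ _r ∈ Finset.Icc 1 s, (n.choose s : ℝ) * t ^ s * (1 - t) ^ (n - s))
      = (s : ℝ) * (n.choose s : ℝ) * t ^ s * (1 - t) ^ (n - s) := by
    intro s hs
    rw [Finset.sum_const, Nat.card_Icc]
    simp at hs
    simp [hs.1]
    ring
  rw [Finset.sum_congr rfl key]
  have reidx : ∑ s ∈ Finset.Icc 1 n, (s : ℝ) * (n.choose s : ℝ) * t ^ s * (1 - t) ^ (n - s)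
      = ∑ k ∈ Finset.range n, ((k+1 : ℕ) : ℝ) * (n.choose (k+1) : ℝ) * t ^ (k+1) * (1 - t) ^ (n - (k+1)) := by
    rw [← Finset.Ico_add_one_right_eq_Icc, Finset.sum_Ico_eq_sum_range]
    simp [add_comm 1]
  rw [reidx]
  have hch : ∀ k, ((k+1 : ℕ) : ℝ) * (n.choose (k+1) : ℝ) = (n : ℝ) * ((n-1).choose k : ℝ) := by
    intro k
    by_cases hn0 : n = 0
    · simp [hn0, Nat.choose_eq_zero_of_lt]
    · have hn1 : n - 1 + 1 = n := Nat.succ_pred_eq_of_pos (Nat.pos_of_ne_zero hn0)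
      have hNat : (k+1) * n.choose (k+1) = n * (n-1).choose k := by
        conv_lhs => rw [← hn1]
        rw [mul_comm, ← Nat.add_one_mul_choose_eq, hn1]
      exact_mod_cast congrArg (Nat.cast : ℕ → ℝ) hNat
  calc ∑ k ∈ Finset.range n, ((k+1 : ℕ) : ℝ) * (n.choose (k+1) : ℝ) * t ^ (k+1) * (1 - t) ^ (n - (k+1))
      = (n : ℝ) * t * ∑ k ∈ Finset.range n, ((n-1).choose k : ℝ) * t ^ k * (1 - t) ^ (n - 1 - k) := by
        rw [Finset.mul_sum]
        refine Finset.sum_congr rfl fun k hk => ?_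
        rw [hch k]
        have : n - (k+1) = n - 1 - k := by omega
        rw [this, pow_succ]
        ring
    _ = n * t := by
        by_cases hn0 : n = 0
        · simp [hn0]
        · have hn1 : n - 1 + 1 = n := Nat.succ_pred_eq_of_pos (Nat.pos_of_ne_zero hn0)
          have := add_pow t (1 - t) (n - 1)
          simp only [add_sub_cancel, one_pow] at this
          rw [show Finset.range n = Finset.range ((n-1)+1) by rw [hn1]]
          have heq : (∑ k ∈ Finset.range (n - 1 + 1), ((n-1).choose k : ℝ) * t ^ k * (1 - t) ^ (n - 1 - k)) = 1 := by
            conv_rhs => rw [this]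
            refine Finset.sum_congr rfl fun k hk => ?_
            ring
          rw [heq, mul_one]

/-- the empirical beta copula
`C_n^β(u) = (1/n) Σ_i Π_j F_{n,R_{ij}}(u_j)` (ranks `R_{ij} = (R i j) + 1`
forming a permutation in each coordinate) has standard uniform margins:
evaluating at the point with `t` in position `j` and `1` elsewhere gives `t`. -/
theorem empirical_beta_copula_margin
    (n d : ℕ) (hn : 1 ≤ n)
    (R : Fin n → Fin d → Fin n)
    (hR : ∀ j : Fin d, Function.Bijective fun i => R i j)
    (j : Fin d) (t : ℝ) (ht : t ∈ Set.Icc (0:ℝ) 1) :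
    (1 / n : ℝ) * ∑ i : Fin n, ∏ j' : Fin d,
        betaOrderCdf n ((R i j' : ℕ) + 1) (Function.update (fun _ => (1:ℝ)) j t j')
      = t := by
  have hprod : ∀ i : Fin n, (∏ j' : Fin d,
      betaOrderCdf n ((R i j' : ℕ) + 1) (Function.update (fun _ => (1:ℝ)) j t j'))
      = betaOrderCdf n ((R i j : ℕ) + 1) t := by
    intro i
    rw [Finset.prod_eq_single j]
    · rw [Function.update_self]
    · intro b _ hb
      rw [Function.update_of_ne hb]
      exact betaOrderCdf_one n _ ((R i b).isLt)
    · simp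
  simp only [hprod]
  have hsum : ∑ i : Fin n, betaOrderCdf n ((R i j : ℕ) + 1) t
      = ∑ r : Fin n, betaOrderCdf n ((r : ℕ) + 1) t :=
    Fintype.sum_bijective _ (hR j) _ _ (fun i => rfl)
  rw [hsum]
  have : ∑ r : Fin n, betaOrderCdf n ((r : ℕ) + 1) t
      = ∑ r ∈ Finset.Icc 1 n, betaOrderCdf n r t := by
    rw [Fin.sum_univ_eq_sum_range (fun k => betaOrderCdf n (k+1) t),
      ← Finset.Ico_add_one_right_eq_Icc, Finset.sum_Ico_eq_sum_range]
    simp [add_comm 1]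
  rw [this, sum_betaOrderCdf]
  have hn0 : (n : ℝ) ≠ 0 := Nat.cast_ne_zero.mpr (by omega)
  field_simp
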